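/- (Shearer-type bound for H-factors) For any graph G on n vertices with at least one H-factor, log Φ(G) ≤ (1/v)·Σ_{y ∈ V(G)} h(y,G), where Φ(G) is the number of H-factors of G and h(y,G) is the entropy of the copy of H containing y in a uniformly random H-factor of G. -/

import Mathlib

open SimpleGraph

def IsHFactor {v n : ℕ} (H : SimpleGraph (Fin v)) (G : SimpleGraph (Fin n))
    (F : Finset G.Subgraph) : Prop :=
  F.card = n / v ∧ (∀ K ∈ F, Nonempty (K.coe ≃g H)) ∧
    ∀ x : Fin n, ∃! K : G.Subgraph, K ∈ F ∧ x ∈ K.verts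

/-- `Φ(G)`: the number of `H`-factors of `G`. -/
noncomputable def numHFactors {v n : ℕ} (H : SimpleGraph (Fin v))
    (G : SimpleGraph (Fin n)) : ℕ :=
  {F : Finset G.Subgraph | IsHFactor H G F}.ncard

/-- The number of `H`-factors of `G` containing the copy `K`. -/
noncomputable def copyWeight {v n : ℕ} (H : SimpleGraph (Fin v))
    (G : SimpleGraph (Fin n)) (K : G.Subgraph) : ℕ :=
  {F : Finset G.Subgraph | IsHFactor H G F ∧ K ∈ F}.ncard

open Classical in
/-- `h(y,G)`: the entropy of the copy of `H` containing `y` in a uniformly random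
`H`-factor of `G`; the copy `K ∋ y` occurs with probability `copyWeight K / Φ(G)`. -/
noncomputable def hent {v n : ℕ} (H : SimpleGraph (Fin v))
    (G : SimpleGraph (Fin n)) (y : Fin n) : ℝ :=
  ∑ᶠ K : G.Subgraph,
    if y ∈ K.verts then
      -((copyWeight H G K : ℝ) / (numHFactors H G : ℝ) *
        Real.log ((copyWeight H G K : ℝ) / (numHFactors H G : ℝ)))
    else 0

open Classical

noncomputable instance subFin {n : ℕ} (G : SimpleGraph (Fin n)) : Fintype G.Subgraph := by
  classical
  exact Fintype.ofInjective (fun K => (K.verts, K.Adj))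
    (fun K K' h => by cases K; cases K'; simp only [Prod.mk.injEq] at h; simp [h.1, h.2])

namespace Stmt10

variable {v n : ℕ} (H : SimpleGraph (Fin v)) (G : SimpleGraph (Fin n))

/-- The finset of all `H`-factors. -/
noncomputable def Om : Finset (Finset G.Subgraph) := Set.toFinset {F | IsHFactor H G F}

lemma mem_Om {F : Finset G.Subgraph} : F ∈ Om H G ↔ IsHFactor H G F := by simp [Om]

lemma Phi_eq : numHFactors H G = (Om H G).card := by
  rw [numHFactors, Set.ncard_eq_toFinset_card']; rfl

lemma w_eq (K : G.Subgraph) :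
    copyWeight H G K = ((Om H G).filter (fun F => K ∈ F)).card := by
  rw [copyWeight, Set.ncard_eq_toFinset_card']
  congr 1; ext F; simp [Om]

lemma card_verts {F : Finset G.Subgraph} {K : G.Subgraph} (hF : IsHFactor H G F)
    (hK : K ∈ F) : K.verts.toFinset.card = v := by
  obtain ⟨e⟩ := hF.2.1 K hK
  rw [Set.toFinset_card]
  have := Fintype.card_congr e.toEquiv
  simpa using this

lemma verts_disj {F : Finset G.Subgraph} {K K' : G.Subgraph} (hF : IsHFactor H G F)
    (hK : K ∈ F) (hK' : K' ∈ F) (hne : K ≠ K') {x : Fin n}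
    (hx : x ∈ K.verts) (hx' : x ∈ K'.verts) : False := by
  obtain ⟨W, -, hW⟩ := hF.2.2 x
  exact hne ((hW K ⟨hK, hx⟩).trans (hW K' ⟨hK', hx'⟩).symm)

/-- double counting: the weights of copies containing `y` sum to `Φ`. -/
lemma sum_w (y : Fin n) :
    ∑ K : G.Subgraph, (if y ∈ K.verts then (copyWeight H G K) else 0) = (Om H G).card := by
  classical
  have h1 : ∀ K : G.Subgraph, (if y ∈ K.verts then (copyWeight H G K) else 0) =
      ∑ F ∈ Om H G, if K ∈ F ∧ y ∈ K.verts then 1 else 0 := by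
    intro K
    by_cases hy : y ∈ K.verts
    · rw [if_pos hy, w_eq, Finset.card_filter]
      exact Finset.sum_congr rfl (fun F hF => by simp [hy])
    · rw [if_neg hy]
      exact (Finset.sum_eq_zero (fun F hF => by simp [hy])).symm
  simp_rw [h1]
  rw [Finset.sum_comm]
  have h2 : ∀ F ∈ Om H G,
      (∑ K : G.Subgraph, if K ∈ F ∧ y ∈ K.verts then 1 else 0) = 1 := by
    intro F hF
    obtain ⟨W, ⟨hWF, hWy⟩, huniq⟩ := ((mem_Om H G).mp hF).2.2 y
    have hset : Finset.univ.filter (fun K : G.Subgraph => K ∈ F ∧ y ∈ K.verts) = {W} := by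
      ext K
      simp only [Finset.mem_filter, Finset.mem_univ, true_and, Finset.mem_singleton]
      exact ⟨fun h => huniq K h, fun h => h ▸ ⟨hWF, hWy⟩⟩
    rw [← Finset.card_filter, hset, Finset.card_singleton]
  rw [Finset.sum_congr rfl h2, Finset.sum_const, smul_eq_mul, mul_one]

/-- The probability that a uniformly random factor contains `K`. -/
noncomputable def p (w : G.Subgraph → ℕ) (Φ : ℕ) (K : G.Subgraph) : ℝ := (w K : ℝ) / (Φ : ℝ)

lemma p_nonneg (w : G.Subgraph → ℕ) (Φ : ℕ) (K : G.Subgraph) : 0 ≤ p G w Φ K :=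
  div_nonneg (Nat.cast_nonneg _) (Nat.cast_nonneg _)

noncomputable def vf (K : G.Subgraph) : Finset (Fin n) := Set.toFinset K.verts

lemma mem_vf {K : G.Subgraph} {x : Fin n} : x ∈ vf G K ↔ x ∈ K.verts := by simp [vf]

/-- The sequential branching upper bound function (with fuel `d`). -/
noncomputable def Qf (w : G.Subgraph → ℕ) (Φ : ℕ) : ℕ → Finset (Fin n) → ℝ
  | 0, _ => 1
  | (d+1), S =>
    if hS : S.Nonempty then
      ∑ K : G.Subgraph, if S.min' hS ∈ K.verts then p G w Φ K * Qf w Φ d (S \ vf G K) else 0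
    else 1

lemma Qf_nonneg (w : G.Subgraph → ℕ) (Φ : ℕ) (d : ℕ) (S : Finset (Fin n)) :
    0 ≤ Qf G w Φ d S := by
  induction d generalizing S with
  | zero => exact zero_le_one
  | succ d ih =>
    rw [Qf]
    split
    · apply Finset.sum_nonneg
      intro K _
      split
      · exact mul_nonneg (p_nonneg G w Φ K) (ih _)
      · exact le_refl 0
    · exact zero_le_one

lemma card_sdiff_lt {S : Finset (Fin n)} (hS : S.Nonempty) {K : G.Subgraph}
    (hK : S.min' hS ∈ K.verts) : (S \ vf G K).card < S.card := by
  apply Finset.card_lt_card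
  refine ⟨Finset.sdiff_subset, fun hsub => ?_⟩
  have h1 : S.min' hS ∈ S \ vf G K := hsub (S.min'_mem hS)
  rw [Finset.mem_sdiff, mem_vf] at h1
  exact h1.2 hK

lemma Qf_le_one (w : G.Subgraph → ℕ) (Φ : ℕ)
    (hsum : ∀ y : Fin n, ∑ K : G.Subgraph, (if y ∈ K.verts then (w K : ℝ) else 0) = (Φ : ℝ))
    (hΦ : 0 < Φ) (d : ℕ) (S : Finset (Fin n)) (hcard : S.card ≤ d) :
    Qf G w Φ d S ≤ 1 := by
  induction d generalizing S with
  | zero => exact le_refl 1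
  | succ d ih =>
    rw [Qf]
    split
    · rename_i hS
      set y := S.min' hS with hy
      calc (∑ K : G.Subgraph, if y ∈ K.verts then p G w Φ K * Qf G w Φ d (S \ vf G K) else 0)
          ≤ ∑ K : G.Subgraph, (if y ∈ K.verts then p G w Φ K else 0) := by
            apply Finset.sum_le_sum
            intro K _
            split
            · rename_i hKy
              have hle := ih (S \ vf G K) (by
                have := card_sdiff_lt G hS hKy
                omega)
              calc p G w Φ K * Qf G w Φ d (S \ vf G K) ≤ p G w Φ K * 1 :=
                    mul_le_mul_of_nonneg_left hle (p_nonneg G w Φ K)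
                _ = p G w Φ K := mul_one _
            · exact le_refl 0
        _ = 1 := by
            have : ∀ K : G.Subgraph, (if y ∈ K.verts then p G w Φ K else 0)
                = (if y ∈ K.verts then (w K : ℝ) else 0) / (Φ : ℝ) := by
              intro K
              split <;> simp [p]
            rw [Finset.sum_congr rfl (fun K _ => this K), ← Finset.sum_div, hsum y,
              div_self (by positivity)]
    · exact le_refl 1

/-- Families of disjoint copies (contained in some factor) covering exactly `S`. -/
noncomputable def D (Om : Finset (Finset G.Subgraph)) (S : Finset (Fin n)) :
    Finset (Finset G.Subgraph) :=
  Finset.univ.filter (fun F' =>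
    (∃ F ∈ Om, F' ⊆ F) ∧ ∀ x : Fin n, x ∈ S ↔ ∃ K ∈ F', x ∈ K.verts)

lemma mem_D {Om : Finset (Finset G.Subgraph)} {S : Finset (Fin n)}
    {F' : Finset G.Subgraph} : F' ∈ D G Om S ↔
    (∃ F ∈ Om, F' ⊆ F) ∧ ∀ x : Fin n, x ∈ S ↔ ∃ K ∈ F', x ∈ K.verts := by
  simp [D]

lemma D_empty_sub {Om : Finset (Finset G.Subgraph)}
    (hne : ∀ F ∈ Om, ∀ K ∈ F, (K.verts).Nonempty)
    {S : Finset (Fin n)} (hS : ¬ S.Nonempty) : D G Om S ⊆ {∅} := by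
  intro F' hF'
  rw [mem_D] at hF'
  rw [Finset.mem_singleton]
  by_contra hFne
  obtain ⟨K, hK⟩ := Finset.nonempty_of_ne_empty hFne
  obtain ⟨F, hFOm, hsub⟩ := hF'.1
  obtain ⟨x, hx⟩ := hne F hFOm K (hsub hK)
  have hxS : x ∈ S := (hF'.2 x).mpr ⟨K, hK, hx⟩
  exact hS ⟨x, hxS⟩

lemma sum_D_le_one {Om : Finset (Finset G.Subgraph)} (w : G.Subgraph → ℕ) (Φ : ℕ)
    (hne : ∀ F ∈ Om, ∀ K ∈ F, (K.verts).Nonempty)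
    {S : Finset (Fin n)} (hS : ¬ S.Nonempty) :
    ∑ F' ∈ D G Om S, ∏ K ∈ F', p G w Φ K ≤ 1 := by
  calc ∑ F' ∈ D G Om S, ∏ K ∈ F', p G w Φ K
      ≤ ∑ F' ∈ ({∅} : Finset (Finset G.Subgraph)), ∏ K ∈ F', p G w Φ K := by
        apply Finset.sum_le_sum_of_subset_of_nonneg (D_empty_sub G hne hS)
        intro F' _ _
        exact Finset.prod_nonneg (fun K _ => p_nonneg G w Φ K)
    _ = 1 := by simp

/-- Key lemma (Kraft-type inequality via sequential decomposition). -/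
lemma sum_D_le (w : G.Subgraph → ℕ) (Φ : ℕ) (Om : Finset (Finset G.Subgraph))
    (hdisj : ∀ F ∈ Om, ∀ K ∈ F, ∀ K' ∈ F, K ≠ K' →
      ∀ x : Fin n, x ∈ K.verts → x ∈ K'.verts → False)
    (hne : ∀ F ∈ Om, ∀ K ∈ F, (K.verts).Nonempty)
    (d : ℕ) (S : Finset (Fin n)) (hcard : S.card ≤ d) :
    ∑ F' ∈ D G Om S, ∏ K ∈ F', p G w Φ K ≤ Qf G w Φ d S := by
  induction d generalizing S with
  | zero =>
    have hS : ¬ S.Nonempty := by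
      rw [Finset.nonempty_iff_ne_empty]
      simp only [ne_eq, not_not]
      exact Finset.card_eq_zero.mp (Nat.le_zero.mp hcard)
    rw [Qf]
    exact sum_D_le_one G w Φ hne hS
  | succ d ih =>
    by_cases hS : S.Nonempty
    · rw [Qf, dif_pos hS]
      set y := S.min' hS with hy
      set g : Finset G.Subgraph → G.Subgraph :=
        fun F' => if h : ∃ K, K ∈ F' ∧ y ∈ K.verts then h.choose else ⊥ with hg
      have hgspec : ∀ F' ∈ D G Om S, g F' ∈ F' ∧ y ∈ (g F').verts := by
        intro F' hF'
        rw [mem_D] at hF'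
        have hex : ∃ K, K ∈ F' ∧ y ∈ K.verts := by
          obtain ⟨K, hK1, hK2⟩ := (hF'.2 y).mp (S.min'_mem hS)
          exact ⟨K, hK1, hK2⟩
        rw [hg]
        simp only [dif_pos hex]
        exact hex.choose_spec
      rw [← Finset.sum_fiberwise_of_maps_to (g := g) (fun F' _ => Finset.mem_univ (g F'))]
      apply Finset.sum_le_sum
      intro K _
      by_cases hfib : ((D G Om S).filter (fun F' => g F' = K)).Nonempty
      · obtain ⟨F'0, hF'0⟩ := hfib
        rw [Finset.mem_filter] at hF'0
        have hyK : y ∈ K.verts := by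
          have := hgspec F'0 hF'0.1
          rw [hF'0.2] at this
          exact this.2
        rw [if_pos hyK]
        have hKmem : ∀ F' ∈ (D G Om S).filter (fun F' => g F' = K), K ∈ F' := by
          intro F' hF'
          rw [Finset.mem_filter] at hF'
          have := hgspec F' hF'.1
          rw [hF'.2] at this
          exact this.1
        calc ∑ F' ∈ (D G Om S).filter (fun F' => g F' = K), ∏ K' ∈ F', p G w Φ K'
            = ∑ F' ∈ (D G Om S).filter (fun F' => g F' = K),
                p G w Φ K * ∏ K' ∈ F'.erase K, p G w Φ K' := by
              apply Finset.sum_congr rfl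
              intro F' hF'
              rw [Finset.mul_prod_erase F' _ (hKmem F' hF')]
          _ = p G w Φ K * ∑ F' ∈ (D G Om S).filter (fun F' => g F' = K),
                ∏ K' ∈ F'.erase K, p G w Φ K' := by rw [Finset.mul_sum]
          _ ≤ p G w Φ K * Qf G w Φ d (S \ vf G K) := by
              apply mul_le_mul_of_nonneg_left _ (p_nonneg G w Φ K)
              have hinj : ∀ F1 ∈ (D G Om S).filter (fun F' => g F' = K),
                  ∀ F2 ∈ (D G Om S).filter (fun F' => g F' = K),
                  F1.erase K = F2.erase K → F1 = F2 := by
                intro F1 h1 F2 h2 heq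
                rw [← Finset.insert_erase (hKmem F1 h1), heq, Finset.insert_erase (hKmem F2 h2)]
              have himg := Finset.sum_image (s := (D G Om S).filter (fun F' => g F' = K))
                (g := fun F' => F'.erase K) (f := fun E => ∏ K' ∈ E, p G w Φ K') hinj
              rw [← himg]
              apply le_trans ?_ (ih (S \ vf G K) (by
                have := card_sdiff_lt G hS hyK
                omega))
              apply Finset.sum_le_sum_of_subset_of_nonneg
              · -- image ⊆ D (S \ vf K)
                intro E hE
                rw [Finset.mem_image] at hE
                obtain ⟨F', hF', hEeq⟩ := hE
                have hKF' := hKmem F' hF'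
                rw [Finset.mem_filter] at hF'
                rw [mem_D] at hF'
                obtain ⟨⟨⟨F, hFOm, hsub⟩, hcov⟩, hgF⟩ := hF'
                rw [mem_D, ← hEeq]
                constructor
                · exact ⟨F, hFOm, (Finset.erase_subset K F').trans hsub⟩
                · intro x
                  rw [Finset.mem_sdiff, mem_vf]
                  constructor
                  · rintro ⟨hxS, hxK⟩
                    obtain ⟨K', hK'F', hxK'⟩ := (hcov x).mp hxS
                    refine ⟨K', Finset.mem_erase.mpr ⟨?_, hK'F'⟩, hxK'⟩
                    rintro rfl
                    exact hxK hxK'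
                  · rintro ⟨K', hK'E, hxK'⟩
                    rw [Finset.mem_erase] at hK'E
                    refine ⟨(hcov x).mpr ⟨K', hK'E.2, hxK'⟩, fun hxK => ?_⟩
                    exact hdisj F hFOm K (hsub hKF') K' (hsub hK'E.2)
                      (Ne.symm hK'E.1) x hxK hxK'
              · intro E _ _
                exact Finset.prod_nonneg (fun K' _ => p_nonneg G w Φ K')
      · rw [Finset.not_nonempty_iff_eq_empty] at hfib
        rw [hfib, Finset.sum_empty]
        split
        · exact mul_nonneg (p_nonneg G w Φ K) (Qf_nonneg G w Φ d _)
        · exact le_refl 0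
    · rw [Qf, dif_neg hS]
      exact sum_D_le_one G w Φ hne hS

lemma hne_Om (hv : 0 < v) : ∀ F ∈ Om H G, ∀ K ∈ F, (K.verts).Nonempty := by
  intro F hF K hK
  have hcard := card_verts H G ((mem_Om H G).mp hF) hK
  have hnonempty : K.verts.toFinset.Nonempty := by
    rw [← Finset.card_pos, hcard]; exact hv
  obtain ⟨x, hx⟩ := hnonempty
  exact ⟨x, Set.mem_toFinset.mp hx⟩

lemma hdisj_Om : ∀ F ∈ Om H G, ∀ K ∈ F, ∀ K' ∈ F, K ≠ K' →
    ∀ x : Fin n, x ∈ K.verts → x ∈ K'.verts → False := by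
  intro F hF K hK K' hK' hne x hx hx'
  exact verts_disj H G ((mem_Om H G).mp hF) hK hK' hne hx hx'

lemma D_univ (hv : 0 < v) : D G (Om H G) Finset.univ = Om H G := by
  ext F'
  rw [mem_D]
  constructor
  · rintro ⟨⟨F, hFOm, hsub⟩, hcov⟩
    have hFF' : F = F' := by
      apply Finset.Subset.antisymm _ hsub
      intro K hKF
      obtain ⟨x, hx⟩ := hne_Om H G hv F hFOm K hKF
      obtain ⟨K', hK'F', hxK'⟩ := (hcov x).mp (Finset.mem_univ x)
      obtain ⟨W, -, hW⟩ := ((mem_Om H G).mp hFOm).2.2 x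
      have e1 := hW K ⟨hKF, hx⟩
      have e2 := hW K' ⟨hsub hK'F', hxK'⟩
      have : K = K' := e1.trans e2.symm
      rw [this]
      exact hK'F'
    rw [← hFF']; exact hFOm
  · intro hF'
    refine ⟨⟨F', hF', Finset.Subset.refl F'⟩, fun x => ?_⟩
    simp only [Finset.mem_univ, true_iff]
    obtain ⟨K, ⟨hKF, hxK⟩, -⟩ := ((mem_Om H G).mp hF').2.2 x
    exact ⟨K, hKF, hxK⟩

end Stmt10

open Stmt10 in
theorem stmt10 {v n : ℕ} (hv : 0 < v) (hvn : v ∣ n) (H : SimpleGraph (Fin v))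
    (G : SimpleGraph (Fin n)) (hΦ : 1 ≤ numHFactors H G) :
    Real.log (numHFactors H G : ℝ) ≤ (1 / (v : ℝ)) * ∑ y : Fin n, hent H G y := by
  classical
  have hPhiOm : numHFactors H G = (Om H G).card := Phi_eq H G
  set Φ := numHFactors H G with hPhi
  set w : G.Subgraph → ℕ := copyWeight H G with hw
  set q : G.Subgraph → ℝ := p G w Φ with hq
  set Φr : ℝ := (Φ : ℝ) with hΦrdef
  have hΦr1 : 1 ≤ Φr := by rw [hΦrdef]; exact_mod_cast hΦ
  have hΦr0 : 0 < Φr := lt_of_lt_of_le zero_lt_one hΦr1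
  have hΦ0 : 0 < Φ := hΦ
  -- real-valued marginal sums
  have hsumr : ∀ y : Fin n,
      ∑ K : G.Subgraph, (if y ∈ K.verts then (w K : ℝ) else 0) = (Φ : ℝ) := by
    intro y
    have h1 := congrArg (Nat.cast : ℕ → ℝ) (sum_w H G y)
    push_cast at h1
    rw [hPhiOm]
    exact h1
  -- Step 1 : ∑_{F ∈ Ω} ∏_{K ∈ F} q K ≤ 1
  have key1 : ∑ F ∈ Om H G, ∏ K ∈ F, q K ≤ 1 := by
    rw [← D_univ H G hv]
    refine le_trans (sum_D_le G w Φ (Om H G) (hdisj_Om H G) (hne_Om H G hv) n Finset.univ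
      (by simp)) ?_
    exact Qf_le_one G w Φ hsumr hΦ0 n Finset.univ (by simp)
  -- positivity of q on members of factors
  have hqpos : ∀ F ∈ Om H G, ∀ K ∈ F, 0 < q K := by
    intro F hF K hK
    apply div_pos _ hΦr0
    have hwK : 0 < w K := by
      rw [hw, w_eq]
      exact Finset.card_pos.mpr ⟨F, Finset.mem_filter.mpr ⟨hF, hK⟩⟩
    exact_mod_cast hwK
  have hqFpos : ∀ F ∈ Om H G, 0 < ∏ K ∈ F, q K :=
    fun F hF => Finset.prod_pos (hqpos F hF)
  -- Step 2 : Φ log Φ ≤ ∑_{F ∈ Ω} (− log ∏_{K∈F} q K)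
  have key2 : Φr * Real.log Φr ≤ ∑ F ∈ Om H G, (- Real.log (∏ K ∈ F, q K)) := by
    have h1 : ∀ F ∈ Om H G,
        Real.log Φr - (- Real.log (∏ K ∈ F, q K)) ≤ Φr * (∏ K ∈ F, q K) - 1 := by
      intro F hF
      have hlog := Real.log_le_sub_one_of_pos (mul_pos hΦr0 (hqFpos F hF))
      rw [Real.log_mul (ne_of_gt hΦr0) (ne_of_gt (hqFpos F hF))] at hlog
      linarith
    have h2 := Finset.sum_le_sum h1
    rw [Finset.sum_sub_distrib, Finset.sum_sub_distrib, Finset.sum_const, Finset.sum_const,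
      ← Finset.mul_sum] at h2
    have hΦcard : ((Om H G).card : ℝ) = Φr := by rw [hΦrdef]; exact_mod_cast hPhiOm.symm
    have h3 : Φr * (∑ F ∈ Om H G, ∏ K ∈ F, q K) ≤ Φr * 1 :=
      mul_le_mul_of_nonneg_left key1 (le_of_lt hΦr0)
    rw [nsmul_eq_mul, nsmul_eq_mul, mul_one, hΦcard] at h2
    rw [mul_one] at h3
    linarith [h2, h3]
  -- Step 3 : rewrite as weighted sum over copies
  have key3 : ∑ F ∈ Om H G, (- Real.log (∏ K ∈ F, q K))
      = ∑ K : G.Subgraph, (w K : ℝ) * (- Real.log (q K)) := by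
    have h1 : ∀ F ∈ Om H G, - Real.log (∏ K ∈ F, q K) = ∑ K ∈ F, (- Real.log (q K)) := by
      intro F hF
      rw [Real.log_prod (fun K hK => ne_of_gt (hqpos F hF K hK)), Finset.sum_neg_distrib]
    rw [Finset.sum_congr rfl h1]
    have h2 : ∀ F ∈ Om H G, (∑ K ∈ F, (- Real.log (q K)))
        = ∑ K : G.Subgraph, (if K ∈ F then - Real.log (q K) else 0) := by
      intro F hF
      rw [Finset.sum_ite_mem, Finset.univ_inter]
    rw [Finset.sum_congr rfl h2, Finset.sum_comm]
    apply Finset.sum_congr rfl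
    intro K _
    rw [← Finset.sum_filter, Finset.sum_const, nsmul_eq_mul]
    congr 1
    rw [hw, w_eq]
  -- Step 4 : the entropy sums
  have hhent : ∀ y : Fin n, hent H G y
      = ∑ K : G.Subgraph, (if y ∈ K.verts then -(q K * Real.log (q K)) else 0) := by
    intro y
    rw [hent, finsum_eq_sum_of_fintype]
    rfl
  have hsum_hent : ∑ y : Fin n, hent H G y
      = ∑ K : G.Subgraph, ((vf G K).card : ℝ) * (-(q K * Real.log (q K))) := by
    rw [Finset.sum_congr rfl (fun y _ => hhent y), Finset.sum_comm]
    apply Finset.sum_congr rfl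
    intro K _
    have : Finset.univ.filter (fun y : Fin n => y ∈ K.verts) = vf G K := by
      ext y; simp [vf]
    rw [← Finset.sum_filter, this, Finset.sum_const, nsmul_eq_mul]
  have hcard_v : ∀ K : G.Subgraph, ((vf G K).card : ℝ) * (-(q K * Real.log (q K)))
      = (v : ℝ) * (-(q K * Real.log (q K))) := by
    intro K
    by_cases hwK : 0 < w K
    · have hfil : ((Om H G).filter (fun F => K ∈ F)).Nonempty := by
        rw [← Finset.card_pos, ← w_eq]
        exact hwK
      obtain ⟨F, hF⟩ := hfil
      rw [Finset.mem_filter] at hF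
      have := card_verts H G ((mem_Om H G).mp hF.1) hF.2
      rw [show vf G K = K.verts.toFinset from rfl, this]
    · have hw0 : w K = 0 := by omega
      have hq0 : q K = 0 := by rw [hq, p, hw0]; simp
      rw [hq0]
      simp
  have hsum_hent2 : ∑ y : Fin n, hent H G y
      = (v : ℝ) * ∑ K : G.Subgraph, (-(q K * Real.log (q K))) := by
    rw [hsum_hent, Finset.sum_congr rfl (fun K _ => hcard_v K), ← Finset.mul_sum]
  -- Step 5 : conclude
  have hterm : ∀ K : G.Subgraph, -(q K * Real.log (q K))
      = ((w K : ℝ) * (- Real.log (q K))) / Φr := by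
    intro K
    rw [hq, p]
    field_simp
    try ring
  have key4 : Real.log Φr ≤ ∑ K : G.Subgraph, (-(q K * Real.log (q K))) := by
    rw [Finset.sum_congr rfl (fun K _ => hterm K), ← Finset.sum_div, ← key3,
      le_div_iff₀ hΦr0]
    calc Real.log Φr * Φr = Φr * Real.log Φr := mul_comm _ _
      _ ≤ _ := key2
  rw [hsum_hent2, ← mul_assoc, one_div, inv_mul_cancel₀ (by exact_mod_cast hv.ne' : (v:ℝ) ≠ 0),
    one_mul]
  exact key4
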